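/- Let k be a nonnegative integer, n ≥ 1 an integer, and λ a nonnegative real number which is an eigenvalue of the Laplacian on the round sphere S^{n−1}, i.e. λ = l(l + n − 2) for some nonnegative integer l, with k + l even. Then (k² + λ − n)² + n²(k² − 1) ≥ 0. -/
import Mathlib

/-- Stability inequality: if `λ = l(l + n − 2)` is an eigenvalue of the Laplacian on `S^{n−1}`
and `k + l` is even, then `(k² + λ − n)² + n²(k² − 1) ≥ 0`. -/
theorem stability_inequality (k l n : ℕ) (hn : 1 ≤ n) (lam : ℝ) (hlam0 : 0 ≤ lam)
    (hlam : lam = (l : ℝ) * ((l : ℝ) + (n : ℝ) - 2)) (hkl : Even (k + l)) :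
    0 ≤ ((k : ℝ) ^ 2 + lam - (n : ℝ)) ^ 2 + (n : ℝ) ^ 2 * ((k : ℝ) ^ 2 - 1) := by
  rcases Nat.eq_zero_or_pos k with hk | hk
  · subst hk
    simp at hkl
    rcases Nat.eq_zero_or_pos l with hl | hl
    · subst hl
      have hn' : (1:ℝ) ≤ (n:ℝ) := by exact_mod_cast hn
      simp at hlam
      subst hlam
      push_cast
      nlinarith
    · have hl2 : 2 ≤ l := by
        rcases hkl with ⟨m, hm⟩
        omega
      have hl2' : (2:ℝ) ≤ (l:ℝ) := by exact_mod_cast hl2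
      have hn' : (1:ℝ) ≤ (n:ℝ) := by exact_mod_cast hn
      have hlam2n : 2 * (n:ℝ) ≤ lam := by
        rw [hlam]; nlinarith
      nlinarith
  · have hk' : (1:ℝ) ≤ (k:ℝ) := by exact_mod_cast hk
    nlinarith [sq_nonneg ((k:ℝ)^2 + lam - (n:ℝ)), sq_nonneg (n:ℝ), mul_le_mul hk' hk' (by norm_num) (by linarith)]
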